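/- Define A = ∑_{m odd, n even} (m² − n²)/(m² + n²)³ and B = ∑'_{(m,n)∈ℤ², n even, (m,n)≠(0,0)} (m² − n²)/(m² + n²)³. Then A = B. -/

import Mathlib

noncomputable def F (p : ℤ × ℤ) : ℝ :=
  ((p.1 : ℝ) ^ 2 - (p.2 : ℝ) ^ 2) / ((p.1 : ℝ) ^ 2 + (p.2 : ℝ) ^ 2) ^ 3

lemma F_summable : Summable F := by
  have h4 : Summable fun (x : Fin 2 → ℤ) ↦ ‖x‖ ^ (-(4:ℝ)) :=
    EisensteinSeries.summable_one_div_norm_rpow (by norm_num)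
  have h : Summable fun p : ℤ × ℤ => ‖(finTwoArrowEquiv ℤ).symm p‖ ^ (-(4:ℝ)) :=
    ((finTwoArrowEquiv ℤ).symm.summable_iff.mpr h4)
  refine h.of_norm_bounded fun p => ?_
  have hnorm : ‖(finTwoArrowEquiv ℤ).symm p‖ = ((max p.1.natAbs p.2.natAbs : ℕ) : ℝ) := by
    rw [EisensteinSeries.norm_eq_max_natAbs]
    simp [finTwoArrowEquiv]
  rcases eq_or_ne p 0 with rfl | hp
  · simp only [F]
    norm_num
  · have hN : 1 ≤ max p.1.natAbs p.2.natAbs := by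
      rw [Ne, Prod.ext_iff, not_and_or] at hp
      simp only [Prod.fst_zero, Prod.snd_zero] at hp
      rcases hp with h | h
      · exact le_max_of_le_left (Int.natAbs_pos.mpr h)
      · exact le_max_of_le_right (Int.natAbs_pos.mpr h)
    rw [hnorm]
    set N : ℝ := ((max p.1.natAbs p.2.natAbs : ℕ) : ℝ) with hNdef
    have hN1 : (1:ℝ) ≤ N := by rw [hNdef]; exact_mod_cast hN
    set a := (p.1 : ℝ); set b := (p.2 : ℝ)
    have hN2 : N ^ 2 ≤ a ^ 2 + b ^ 2 := by
      have h1 : ((p.1.natAbs : ℝ)) ^ 2 = a ^ 2 := by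
        rw [Nat.cast_natAbs, Int.cast_abs, sq_abs]
      have h2 : ((p.2.natAbs : ℝ)) ^ 2 = b ^ 2 := by
        rw [Nat.cast_natAbs, Int.cast_abs, sq_abs]
      rcases max_cases p.1.natAbs p.2.natAbs with ⟨hm, _⟩ | ⟨hm, _⟩ <;>
        rw [hNdef, hm] <;> nlinarith [sq_nonneg a, sq_nonneg b]
    have hS : (0:ℝ) < a ^ 2 + b ^ 2 := by nlinarith
    have habs : |a ^ 2 - b ^ 2| ≤ a ^ 2 + b ^ 2 :=
      abs_le.mpr ⟨by nlinarith [sq_nonneg a, sq_nonneg b], by nlinarith [sq_nonneg a, sq_nonneg b]⟩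
    have hrw : N ^ (-(4:ℝ)) = 1 / N ^ (4:ℕ) := by
      rw [Real.rpow_neg (by linarith), inv_eq_one_div,
        show ((4:ℝ)) = ((4:ℕ):ℝ) by norm_num, Real.rpow_natCast]
    rw [hrw, F, Real.norm_eq_abs, abs_div, abs_pow, abs_of_pos hS,
      div_le_div_iff₀ (by positivity) (by positivity)]
    show |a ^ 2 - b ^ 2| * N ^ 4 ≤ 1 * (a ^ 2 + b ^ 2) ^ 3
    have h44 : N ^ 4 ≤ (a ^ 2 + b ^ 2) ^ 2 := by nlinarith
    calc |a ^ 2 - b ^ 2| * N ^ 4 ≤ (a ^ 2 + b ^ 2) * (a ^ 2 + b ^ 2) ^ 2 :=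
          mul_le_mul habs h44 (by positivity) hS.le
      _ = 1 * (a ^ 2 + b ^ 2) ^ 3 := by ring

lemma F_swap (p : ℤ × ℤ) : F p.swap = -F p := by
  simp only [F, Prod.fst_swap, Prod.snd_swap]
  have hnum : ((p.2:ℝ))^2 - (p.1:ℝ)^2 = -(((p.1:ℝ))^2 - (p.2:ℝ)^2) := by ring
  have hden : (((p.2:ℝ))^2 + (p.1:ℝ)^2)^3 = (((p.1:ℝ))^2 + (p.2:ℝ)^2)^3 := by ring
  rw [hnum, hden, neg_div]

def eswap : {p : ℤ × ℤ // p ≠ 0} ≃ {p : ℤ × ℤ // p ≠ 0} :=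
  (Equiv.prodComm ℤ ℤ).subtypeEquiv (fun p => by simp [Prod.ext_iff, and_comm])

lemma tsum_F_zero : ∑' p : {p : ℤ × ℤ // p ≠ 0}, F p.1 = 0 := by
  have h1 : ∑' p : {p : ℤ × ℤ // p ≠ 0}, F p.1 = ∑' p : {p : ℤ × ℤ // p ≠ 0}, F (eswap p).1 :=
    (eswap.tsum_eq _).symm
  have h2 : ∀ p : {p : ℤ × ℤ // p ≠ 0}, F (eswap p).1 = -F p.1 := fun p => F_swap p.1
  simp_rw [h2, tsum_neg] at h1
  linarith

def dbl : {p : ℤ × ℤ // p ≠ 0} → {p : ℤ × ℤ // p ≠ 0} :=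
  fun p => ⟨(2 * p.1.1, 2 * p.1.2), by
    intro h
    rw [Prod.ext_iff] at h
    exact p.2 (Prod.ext (by simpa using h.1) (by simpa using h.2))⟩

lemma dbl_inj : Function.Injective dbl := by
  intro a b h
  apply Subtype.ext
  simp only [dbl, Subtype.mk.injEq, Prod.ext_iff] at h
  exact Prod.ext (by omega) (by omega)

lemma F_dbl (p : ℤ × ℤ) : F (2 * p.1, 2 * p.2) = F p / 16 := by
  simp only [F]
  push_cast
  have h64 : ((2*(p.1:ℝ))^2+(2*(p.2:ℝ))^2)^3 = 4 * (16 * (((p.1:ℝ))^2+((p.2:ℝ))^2)^3) := by ring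
  have hnum : (2*(p.1:ℝ))^2-(2*(p.2:ℝ))^2 = 4 * (((p.1:ℝ))^2-((p.2:ℝ))^2) := by ring
  rw [hnum, h64, mul_div_mul_left _ _ (by norm_num : (4:ℝ) ≠ 0), div_div, mul_comm]

lemma tsum_even_even :
    ∑' p : {p : ℤ × ℤ // p ≠ 0},
      (if Even p.1.1 ∧ Even p.1.2 then F p.1 else 0) = 0 := by
  have hsupp : Function.support
      (fun p : {p : ℤ × ℤ // p ≠ 0} => if Even p.1.1 ∧ Even p.1.2 then F p.1 else 0)
      ⊆ Set.range dbl := by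
    intro p hp
    simp only [Function.mem_support, ne_eq, ite_eq_right_iff, not_forall] at hp
    obtain ⟨⟨⟨k, hk⟩, ⟨l, hl⟩⟩, -⟩ := hp
    refine ⟨⟨(k, l), fun h => ?_⟩, ?_⟩
    · apply p.2
      rw [Prod.ext_iff] at h ⊢
      simp only [Prod.fst_zero, Prod.snd_zero] at h ⊢
      exact ⟨by omega, by omega⟩
    · apply Subtype.ext
      show (2 * k, 2 * l) = p.1
      rw [Prod.ext_iff]
      exact ⟨by dsimp; omega, by dsimp; omega⟩
  have := dbl_inj.tsum_eq hsupp
  rw [← this]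
  have key : ∀ b : {p : ℤ × ℤ // p ≠ 0},
      (if Even (dbl b).1.1 ∧ Even (dbl b).1.2 then F (dbl b).1 else 0) = F b.1 / 16 := by
    intro b
    rw [if_pos ⟨⟨b.1.1, by simp [dbl]; ring⟩, ⟨b.1.2, by simp [dbl]; ring⟩⟩]
    exact F_dbl b.1
  simp_rw [key, tsum_div_const, tsum_F_zero, zero_div]

lemma summable_ite (c : {p : ℤ × ℤ // p ≠ 0} → Prop) [DecidablePred c] :
    Summable (fun p : {p : ℤ × ℤ // p ≠ 0} => if c p then F p.1 else 0) := by
  refine Summable.of_norm_bounded (g := fun p => |F p.1|) ((F_summable.subtype _).abs) fun p => ?_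
  by_cases h : c p <;> simp [h, Real.norm_eq_abs, abs_nonneg, le_refl]

theorem stmt11 :
    (∑' p : {p : ℤ × ℤ // p ≠ 0}, (if Odd p.1.1 ∧ Even p.1.2 then ((p.1.1 : ℝ) ^ 2 - (p.1.2 : ℝ) ^ 2) / ((p.1.1 : ℝ) ^ 2 + (p.1.2 : ℝ) ^ 2) ^ 3 else 0))
      = (∑' p : {p : ℤ × ℤ // p ≠ 0}, (if Even p.1.2 then ((p.1.1 : ℝ) ^ 2 - (p.1.2 : ℝ) ^ 2) / ((p.1.1 : ℝ) ^ 2 + (p.1.2 : ℝ) ^ 2) ^ 3 else 0)) := by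
  show (∑' p : {p : ℤ × ℤ // p ≠ 0}, (if Odd p.1.1 ∧ Even p.1.2 then F p.1 else 0))
      = (∑' p : {p : ℤ × ℤ // p ≠ 0}, (if Even p.1.2 then F p.1 else 0))
  have hsplit : ∀ p : {p : ℤ × ℤ // p ≠ 0}, (if Even p.1.2 then F p.1 else 0) =
      (if Odd p.1.1 ∧ Even p.1.2 then F p.1 else 0)
      + (if Even p.1.1 ∧ Even p.1.2 then F p.1 else 0) := by
    intro p
    rcases Int.even_or_odd p.1.1 with h | h
    · simp [h, Int.not_odd_iff_even.mpr h]
    · simp [h, Int.not_even_iff_odd.mpr h]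
  rw [tsum_congr hsplit, Summable.tsum_add (summable_ite _) (summable_ite _), tsum_even_even, add_zero]
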